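/- Let Γ = Γ₁ * Γ₂ be the free product of two groups, let |g| denote the word length of g ∈ Γ with respect to this free product decomposition (the number of alternating syllables), and let 0 < ρ < 1. Then the function φ_ρ : Γ → ℂ defined by φ_ρ(g) = ρ^{|g|} is positive definite on Γ, i.e., for all finite families g₁, …, g_n ∈ Γ and c₁, …, c_n ∈ ℂ, one has ∑_{i,j} c̄_i c_j φ_ρ(g_i⁻¹ g_j) ≥ 0. -/

import Mathlib

open scoped ComplexConjugate ComplexOrder

/-- The word length of an element of a free product: the number of alternating syllables
in its unique reduced expression (and `0` for the identity). -/
noncomputable def freeProductWordLength {ι : Type*} {M : ι → Type*} [∀ i, Group (M i)]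
    (g : Monoid.CoprodI M) : ℕ := by
  classical exact (Monoid.CoprodI.Word.equiv g).toList.length

namespace FPPD

open Monoid.CoprodI Monoid.CoprodI.Word

variable {ι : Type*} [DecidableEq ι] {M : ι → Type*} [∀ i, Group (M i)]
  [∀ i, DecidableEq (M i)]

/-- The leading `i`-syllable of an element. -/
def headI (i : ι) (x : Monoid.CoprodI M) : M i := (Word.equivPair i (Word.equiv x)).head

/-- The element with its leading `i`-syllable removed. -/
def tailI (i : ι) (x : Monoid.CoprodI M) : Monoid.CoprodI M :=
  Word.prod (Word.equivPair i (Word.equiv x)).tail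

lemma prod_equiv (x : Monoid.CoprodI M) : Word.prod (Word.equiv x) = x :=
  Word.equiv.symm_apply_apply x

lemma equiv_mul (a x : Monoid.CoprodI M) : Word.equiv (a * x) = a • Word.equiv x := by
  apply Word.equiv.symm.injective
  rw [Equiv.symm_apply_apply]
  show a * x = Word.prod _
  rw [Word.prod_smul, prod_equiv]

lemma equiv_prod (w : Word M) : Word.equiv (Word.prod w) = w :=
  Word.equiv.apply_symm_apply w

lemma equiv_one : Word.equiv (1 : Monoid.CoprodI M) = Word.empty := by
  rw [← Word.prod_empty, equiv_prod]

lemma headI_one (i : ι) : headI i (1 : Monoid.CoprodI M) = 1 := by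
  rw [headI, equiv_one, Word.equivPair_eq_of_fstIdx_ne] <;> simp [Word.fstIdx, Word.empty]

lemma headI_mul (i : ι) (m : M i) (x : Monoid.CoprodI M) :
    headI i (of m * x) = m * headI i x := by
  rw [headI, headI, equiv_mul, Word.equivPair_smul_same]

lemma headI_eq_one_of_fstIdx_ne {i : ι} {x : Monoid.CoprodI M}
    (h : Word.fstIdx (Word.equiv x) ≠ some i) : headI i x = 1 := by
  rw [headI, Word.equivPair_eq_of_fstIdx_ne h]

lemma of_headI_mul_tailI (i : ι) (x : Monoid.CoprodI M) :
    of (headI i x) * tailI i x = x := by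
  have h := Word.equivPair_head_smul_equivPair_tail (i := i) (Word.equiv x)
  have := congrArg Word.prod h
  rwa [Word.prod_smul, prod_equiv] at this

lemma fstIdx_equiv_tailI (i : ι) (x : Monoid.CoprodI M) :
    Word.fstIdx (Word.equiv (tailI i x)) ≠ some i := by
  rw [tailI, equiv_prod]
  exact (Word.equivPair i (Word.equiv x)).fstIdx_ne


lemma headI_of (i : ι) (m : M i) : headI i (of m) = m := by
  have := headI_mul i m (1 : Monoid.CoprodI M)
  simpa [headI_one] using this

lemma fstIdx_equiv_of_ne {j i : ι} (h : j ≠ i) (m : M j) :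
    Word.fstIdx (Word.equiv (of m)) ≠ some i := by
  have h1 : Word.equiv (of m * 1) = of m • Word.equiv (1 : Monoid.CoprodI M) := equiv_mul _ _
  rw [mul_one, equiv_one, Word.of_smul_def] at h1
  rw [h1]
  rw [Word.equivPair_eq_of_fstIdx_ne (by simp [Word.fstIdx, Word.empty])]
  by_cases hm : m = 1
  · simp [Word.rcons, hm, Word.fstIdx, Word.empty]
  · simp only [Word.rcons, hm]
    simp only [mul_one, hm, dite_false, dif_neg]
    simp [Word.fstIdx, Word.cons, h]

lemma eq_one_of_mem_range_of_fstIdx_ne {i : ι} {z : Monoid.CoprodI M}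
    (hz : z ∈ (of : M i →* Monoid.CoprodI M).range)
    (h : Word.fstIdx (Word.equiv z) ≠ some i) : z = 1 := by
  obtain ⟨γ, rfl⟩ := hz
  have : headI i (of γ) = 1 := headI_eq_one_of_fstIdx_ne h
  rw [headI_of] at this
  rw [this, map_one]

lemma fstIdx_equiv_mul {j : ι} (m : M j) (y : Monoid.CoprodI M)
    (h : m * headI j y ≠ 1) : Word.fstIdx (Word.equiv (of m * y)) = some j := by
  rw [equiv_mul, Word.of_smul_def, Word.rcons]
  split_ifs with hh
  · exact absurd hh h
  · simp [Word.fstIdx, Word.cons]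

lemma len_eq (g : Monoid.CoprodI M) :
    freeProductWordLength g = (Word.equiv g).toList.length := by
  unfold freeProductWordLength
  congr!

lemma len_one : freeProductWordLength (1 : Monoid.CoprodI M) = 0 := by
  rw [len_eq, equiv_one]; rfl

lemma eq_one_of_len_eq_zero {z : Monoid.CoprodI M}
    (h : freeProductWordLength z = 0) : z = 1 := by
  rw [len_eq, List.length_eq_zero_iff] at h
  have : Word.equiv z = Word.empty := Word.ext h
  have := congrArg Word.prod this
  rwa [prod_equiv, Word.prod_empty] at this

lemma len_mul {i : ι} (m : M i) (h1 : m ≠ 1) (x : Monoid.CoprodI M)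
    (h2 : Word.fstIdx (Word.equiv x) ≠ some i) :
    freeProductWordLength (of m * x) = freeProductWordLength x + 1 := by
  rw [len_eq, len_eq, equiv_mul, Word.of_smul_def,
    Word.equivPair_eq_of_fstIdx_ne h2, Word.rcons]
  split_ifs with hh
  · rw [mul_one] at hh; exact absurd hh h1
  · simp [Word.cons]

lemma headI_ne_one_of_fstIdx {i : ι} {z : Monoid.CoprodI M}
    (h : Word.fstIdx (Word.equiv z) = some i) : headI i z ≠ 1 := by
  intro hone
  have hd := of_headI_mul_tailI i z
  rw [hone, map_one, one_mul] at hd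
  have := fstIdx_equiv_tailI i z
  rw [hd, h] at this
  exact this rfl

lemma exists_fstIdx {z : Monoid.CoprodI M} (h : z ≠ 1) :
    ∃ i, Word.fstIdx (Word.equiv z) = some i := by
  rcases hl : (Word.equiv z).toList with _ | ⟨a, l⟩
  · exact absurd (eq_one_of_len_eq_zero (by rw [len_eq, hl]; rfl)) h
  · exact ⟨a.1, by simp [Word.fstIdx, hl]⟩

lemma len_tailI {i : ι} {z : Monoid.CoprodI M}
    (h : Word.fstIdx (Word.equiv z) = some i) :
    freeProductWordLength z = freeProductWordLength (tailI i z) + 1 := by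
  conv_lhs => rw [← of_headI_mul_tailI i z]
  exact len_mul _ (headI_ne_one_of_fstIdx h) _ (fstIdx_equiv_tailI i z)


lemma fstIdx_mul_of_aux : ∀ (n : ℕ) (z : Monoid.CoprodI M), freeProductWordLength z ≤ n →
    ∀ {i₀ : ι} (s : M i₀), z ∉ (of : M i₀ →* Monoid.CoprodI M).range →
    Word.fstIdx (Word.equiv (z * of s)) = Word.fstIdx (Word.equiv z) := by
  intro n
  induction n with
  | zero =>
    intro z hz i₀ s hmem
    exact absurd (eq_one_of_len_eq_zero (Nat.le_zero.mp hz) ▸ one_mem _) hmem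
  | succ n ih =>
    intro z hz i₀ s hmem
    by_cases h1 : z = 1
    · exact absurd (h1 ▸ one_mem _) hmem
    obtain ⟨j, hj⟩ := exists_fstIdx h1
    set m := headI j z with hm
    set t := tailI j z with htdef
    have hmne : m ≠ 1 := headI_ne_one_of_fstIdx hj
    have hzd : of m * t = z := of_headI_mul_tailI j z
    have ht : Word.fstIdx (Word.equiv t) ≠ some j := fstIdx_equiv_tailI j z
    have hlt : freeProductWordLength t ≤ n := by
      have h5 := len_tailI hj
      rw [← htdef] at h5; omega
    by_cases hT : t ∈ (of : M i₀ →* Monoid.CoprodI M).range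
    · obtain ⟨γ, hγ⟩ := hT
      by_cases hji : j = i₀
      · subst hji
        have : t = 1 := eq_one_of_mem_range_of_fstIdx_ne ⟨γ, hγ⟩ ht
        rw [this, mul_one] at hzd
        exact absurd (hzd ▸ ⟨m, rfl⟩) hmem
      · have hz2 : z * of s = of m * of (γ * s) := by
          rw [← hzd, ← hγ, mul_assoc, map_mul]
        rw [hz2, fstIdx_equiv_mul, hj]
        rw [headI_eq_one_of_fstIdx_ne (fstIdx_equiv_of_ne (Ne.symm hji) _), mul_one]
        exact hmne
    · have hrec := ih t hlt s hT
      have hz2 : z * of s = of m * (t * of s) := by rw [← hzd, mul_assoc]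
      rw [hz2, fstIdx_equiv_mul, hj]
      rw [headI_eq_one_of_fstIdx_ne (hrec ▸ ht), mul_one]
      exact hmne

lemma headI_mul_of {i i₀ : ι} (u : Monoid.CoprodI M) (s : M i₀)
    (h : ¬(i = i₀ ∧ u ∈ (of : M i₀ →* Monoid.CoprodI M).range)) :
    headI i (u * of s) = headI i u := by
  set h₀ := headI i u with hh
  set t := tailI i u with htd
  have hud : of h₀ * t = u := of_headI_mul_tailI i u
  have ht : Word.fstIdx (Word.equiv t) ≠ some i := fstIdx_equiv_tailI i u
  have key : headI i (t * of s) = 1 := by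
    by_cases hT : t ∈ (of : M i₀ →* Monoid.CoprodI M).range
    · obtain ⟨γ, hγ⟩ := hT
      have hii : i ≠ i₀ := by
        rintro rfl
        have : t = 1 := eq_one_of_mem_range_of_fstIdx_ne ⟨γ, hγ⟩ ht
        rw [this, mul_one] at hud
        exact h ⟨rfl, hud ▸ ⟨h₀, rfl⟩⟩
      rw [← hγ, ← map_mul]
      exact headI_eq_one_of_fstIdx_ne (fstIdx_equiv_of_ne (Ne.symm hii) _)
    · exact headI_eq_one_of_fstIdx_ne
        ((fstIdx_mul_of_aux (freeProductWordLength t) t le_rfl s hT) ▸ ht)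
  calc headI i (u * of s) = headI i (of h₀ * (t * of s)) := by rw [← hud, mul_assoc]
    _ = h₀ * headI i (t * of s) := headI_mul _ _ _
    _ = h₀ := by rw [key, mul_one]
    _ = headI i u := hh


variable (M) in
/-- The image of the `i`-th factor. -/
def Rng (i : ι) : Subgroup (Monoid.CoprodI M) := (of : M i →* Monoid.CoprodI M).range

variable (M) in
/-- Vertices of the Bass–Serre tree: cosets of the factors. -/
def Vert : Type _ := (i : ι) × (Monoid.CoprodI M ⧸ Rng M i)

/-- The "component" function at a vertex. -/
def q (v : Vert M) (x : Monoid.CoprodI M) : Monoid.CoprodI M :=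
  Quotient.liftOn' v.2 (fun w => w * of (headI v.1 (w⁻¹ * x))) (by
    intro a b hab
    rw [QuotientGroup.leftRel_apply] at hab
    obtain ⟨γ, hγ⟩ := hab
    have hb : b = a * of γ := by rw [hγ]; group
    subst hb
    show a * of (headI v.1 (a⁻¹ * x)) = (a * of γ) * of (headI v.1 ((a * of γ)⁻¹ * x))
    have h2 : (a * of γ)⁻¹ * x = of γ⁻¹ * (a⁻¹ * x) := by
      rw [map_inv]; group
    rw [h2, headI_mul, map_mul, map_inv]
    group)

lemma q_mk (i : ι) (w x : Monoid.CoprodI M) :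
    q ⟨i, QuotientGroup.mk w⟩ x = w * of (headI i (w⁻¹ * x)) := rfl

/-- Left translation on vertices. -/
def vmap (g : Monoid.CoprodI M) (v : Vert M) : Vert M :=
  ⟨v.1, Quotient.map' (fun w => g * w) (by
    intro a b hab
    rw [QuotientGroup.leftRel_apply] at hab ⊢
    simpa [mul_assoc] using hab) v.2⟩

lemma vmap_mk (g : Monoid.CoprodI M) (i : ι) (w : Monoid.CoprodI M) :
    vmap g ⟨i, QuotientGroup.mk w⟩ = ⟨i, QuotientGroup.mk (g * w)⟩ := rfl

lemma vmap_vmap (a b : Monoid.CoprodI M) (v : Vert M) :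
    vmap a (vmap b v) = vmap (a * b) v := by
  obtain ⟨i, c⟩ := v
  induction c using Quotient.inductionOn' with
  | h w => rw [vmap_mk, vmap_mk, vmap_mk, mul_assoc]

lemma vmap_one (v : Vert M) : vmap 1 v = v := by
  obtain ⟨i, c⟩ := v
  induction c using Quotient.inductionOn' with
  | h w => rw [vmap_mk, one_mul]

lemma vmap_injective (g : Monoid.CoprodI M) : Function.Injective (vmap (M := M) g) := by
  intro v w h
  have := congrArg (vmap g⁻¹) h
  rwa [vmap_vmap, vmap_vmap, inv_mul_cancel, vmap_one, vmap_one] at this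

lemma q_vmap (g : Monoid.CoprodI M) (v : Vert M) (x : Monoid.CoprodI M) :
    q (vmap g v) (g * x) = g * q v x := by
  obtain ⟨i, c⟩ := v
  induction c using Quotient.inductionOn' with
  | h w =>
    show q ⟨i, QuotientGroup.mk (g * w)⟩ (g * x) = _
    rw [q_mk, q_mk]
    have : (g * w)⁻¹ * (g * x) = w⁻¹ * x := by group
    rw [this, mul_assoc]

variable (M) in
/-- The separation set of a pair of group elements. -/
def T (x y : Monoid.CoprodI M) : Set (Vert M) := {v | q v x ≠ q v y}

lemma T_comm (x y : Monoid.CoprodI M) : T M x y = T M y x := by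
  ext v; exact ne_comm

lemma mem_T_vmap {g x y : Monoid.CoprodI M} {v : Vert M} :
    vmap g v ∈ T M (g * x) (g * y) ↔ v ∈ T M x y := by
  simp only [T, Set.mem_setOf_eq, q_vmap, ne_eq, mul_right_inj]

lemma T_translate (g x y : Monoid.CoprodI M) :
    T M (g * x) (g * y) = vmap g '' T M x y := by
  ext v
  constructor
  · intro hv
    refine ⟨vmap g⁻¹ v, ?_, ?_⟩
    · rw [← mem_T_vmap (g := g)]
      rwa [vmap_vmap, mul_inv_cancel, vmap_one]
    · rw [vmap_vmap, mul_inv_cancel, vmap_one]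
  · rintro ⟨w, hw, rfl⟩
    exact mem_T_vmap.mpr hw


lemma q_base (j : ι) (x : Monoid.CoprodI M) :
    q ⟨j, QuotientGroup.mk 1⟩ x = of (headI j x) := by
  rw [q_mk]; simp

lemma q_eq_of_ne_base {i₀ : ι} (s : M i₀) {v : Vert M}
    (hv : v ≠ ⟨i₀, QuotientGroup.mk 1⟩) : q v (of s) = q v 1 := by
  obtain ⟨i, c⟩ := v
  induction c using Quotient.inductionOn' with
  | h w =>
    have hR : ¬(i = i₀ ∧ w⁻¹ ∈ (of : M i₀ →* Monoid.CoprodI M).range) := by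
      rintro ⟨rfl, hw⟩
      apply hv
      have hw' : w ∈ Rng M i := (Rng M i).inv_mem_iff.mp hw
      have : (QuotientGroup.mk w : Monoid.CoprodI M ⧸ Rng M i) = QuotientGroup.mk 1 := by
        rw [QuotientGroup.eq]
        simpa using hw'
      rw [show Quotient.mk'' w = QuotientGroup.mk w from rfl, this]
    show q ⟨i, QuotientGroup.mk w⟩ (of s) = q ⟨i, QuotientGroup.mk w⟩ 1
    rw [q_mk, q_mk, mul_one]
    rw [headI_mul_of w⁻¹ s hR]

lemma T_one_one : T M 1 1 = ∅ := by
  ext v; simp [T]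

lemma main_count : ∀ (n : ℕ) (z : Monoid.CoprodI M), freeProductWordLength z = n →
    (T M 1 z).Finite ∧ (T M 1 z).ncard = n := by
  intro n
  induction n with
  | zero =>
    intro z hz
    rw [eq_one_of_len_eq_zero hz, T_one_one]
    exact ⟨Set.finite_empty, Set.ncard_empty _⟩
  | succ n ih =>
    intro z hz
    have h1 : z ≠ 1 := fun h => by rw [h, len_one] at hz; omega
    obtain ⟨j, hj⟩ := exists_fstIdx h1
    set m := headI j z with hm
    set t := tailI j z with htd
    have hmne : m ≠ 1 := headI_ne_one_of_fstIdx hj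
    have hzd : of m * t = z := of_headI_mul_tailI j z
    have ht : Word.fstIdx (Word.equiv t) ≠ some j := fstIdx_equiv_tailI j z
    have hlt : freeProductWordLength t = n := by
      have h5 := len_tailI hj
      rw [← htd] at h5; omega
    obtain ⟨hfin, hcard⟩ := ih t hlt
    have hfin' : (T M t 1).Finite := by rwa [T_comm]
    have hcard' : (T M t 1).ncard = n := by rwa [T_comm]
    set v₀ : Vert M := ⟨j, QuotientGroup.mk 1⟩ with hv₀
    -- q v₀ values
    have hqt : q v₀ t = 1 := by
      rw [hv₀, q_base, headI_eq_one_of_fstIdx_ne ht, map_one]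
    have hq1 : q v₀ (1 : Monoid.CoprodI M) = 1 := by
      rw [hv₀, q_base, headI_one, map_one]
    have hqm : q v₀ (of m)⁻¹ = of m⁻¹ := by
      rw [hv₀, ← map_inv, q_base, headI_of]
    have hv₀T : v₀ ∉ T M t 1 := by
      simp [T, hqt, hq1]
    have hv₀T' : v₀ ∈ T M t ((of m)⁻¹) := by
      simp only [T, Set.mem_setOf_eq, hqt, hqm]
      intro hcontra
      exact hmne (by simpa using ((Monoid.CoprodI.of_injective j).eq_iff.mp
        (by rw [← hcontra, map_one]) : m⁻¹ = 1))
    have hins : T M t ((of m)⁻¹) = insert v₀ (T M t 1) := by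
      ext v
      by_cases hv : v = v₀
      · subst hv
        simp only [Set.mem_insert_iff, true_or, iff_true]
        exact hv₀T'
      · have hne : v ≠ ⟨j, QuotientGroup.mk 1⟩ := fun h => hv (h.trans hv₀.symm)
        have h6 := q_eq_of_ne_base m⁻¹ (v := v) hne
        rw [map_inv] at h6
        simp only [T, Set.mem_setOf_eq, Set.mem_insert_iff, hv, false_or, h6]
    have hTz : T M 1 z = vmap (of m) '' T M t ((of m)⁻¹) := by
      rw [T_comm]
      have : z = of m * t := hzd.symm
      rw [this]
      have h2 : (1 : Monoid.CoprodI M) = of m * (of m)⁻¹ := by group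
      rw [h2, T_translate]
    constructor
    · rw [hTz, hins]
      exact ((hfin'.insert v₀).image _)
    · rw [hTz, hins, Set.ncard_image_of_injective _ (vmap_injective _),
        Set.ncard_insert_of_notMem hv₀T hfin', hcard']

lemma key_count (x y : Monoid.CoprodI M) :
    (T M x y).Finite ∧ (T M x y).ncard = freeProductWordLength (x⁻¹ * y) := by
  have h1 : T M x y = vmap x '' T M 1 (x⁻¹ * y) := by
    have : x * (x⁻¹ * y) = y := by group
    rw [← T_translate, mul_one, this]
  obtain ⟨hfin, hcard⟩ := main_count (freeProductWordLength (x⁻¹ * y)) _ rfl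
  exact ⟨h1 ▸ hfin.image _,
    by rw [h1, Set.ncard_image_of_injective _ (vmap_injective _), hcard]⟩



lemma posdef_cut {ν' Ω : Type*} [DecidableEq Ω] (ρ : ℝ) (h0 : 0 ≤ ρ) (h1 : ρ ≤ 1)
    {n : ℕ} (p : ν' → Fin n → Ω) (S : Finset ν') :
    ∀ c : Fin n → ℂ,
    0 ≤ ∑ i, ∑ j, conj (c i) * c j *
      ((ρ : ℂ) ^ (S.filter fun v => p v i ≠ p v j).card) := by
  classical
  induction S using Finset.induction_on with
  | empty =>
    intro c
    simp only [Finset.filter_empty, Finset.card_empty, pow_zero, mul_one]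
    have : ∑ i, ∑ j, conj (c i) * c j = conj (∑ i, c i) * (∑ j, c j) := by
      rw [map_sum, Finset.sum_mul_sum]
    rw [this]
    exact star_mul_self_nonneg _
  | @insert a S ha ih =>
    intro c
    have hcard : ∀ i j, ((insert a S).filter fun v => p v i ≠ p v j).card =
        (S.filter fun v => p v i ≠ p v j).card + (if p a i ≠ p a j then 1 else 0) := by
      intro i j
      rw [Finset.filter_insert]
      split_ifs with h
      · rw [Finset.card_insert_of_notMem (fun hmem => ha (Finset.mem_of_mem_filter a hmem))]
      · rw [add_zero]
    have hker : ∀ i j, conj (c i) * c j *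
        ((ρ : ℂ) ^ ((insert a S).filter fun v => p v i ≠ p v j).card)
        = (ρ : ℂ) * (conj (c i) * c j * ((ρ:ℂ) ^ (S.filter fun v => p v i ≠ p v j).card))
          + (1 - (ρ:ℂ)) * (if p a i = p a j then
              conj (c i) * c j * ((ρ:ℂ) ^ (S.filter fun v => p v i ≠ p v j).card) else 0) := by
      intro i j
      rw [hcard]
      by_cases h : p a i = p a j
      · simp only [h, ne_eq, not_true_eq_false, if_false, if_true, add_zero, pow_add, pow_zero,
          mul_one, ite_true]
        ring
      · simp only [h, ne_eq, not_false_eq_true, if_true, if_false, pow_add, pow_one, ite_false]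
        ring
    have hsplit : ∑ i, ∑ j, conj (c i) * c j *
        ((ρ : ℂ) ^ ((insert a S).filter fun v => p v i ≠ p v j).card)
        = (ρ : ℂ) * (∑ i, ∑ j, conj (c i) * c j *
            ((ρ:ℂ) ^ (S.filter fun v => p v i ≠ p v j).card))
          + (1 - (ρ:ℂ)) * (∑ i, ∑ j, if p a i = p a j then
              conj (c i) * c j * ((ρ:ℂ) ^ (S.filter fun v => p v i ≠ p v j).card) else 0) := by
      rw [Finset.mul_sum, Finset.mul_sum, ← Finset.sum_add_distrib]
      refine Finset.sum_congr rfl fun i _ => ?_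
      rw [Finset.mul_sum, Finset.mul_sum, ← Finset.sum_add_distrib]
      exact Finset.sum_congr rfl fun j _ => hker i j
    rw [hsplit]
    have hB : (0:ℂ) ≤ ∑ i, ∑ j, if p a i = p a j then
        conj (c i) * c j * ((ρ:ℂ) ^ (S.filter fun v => p v i ≠ p v j).card) else 0 := by
      have hpt : ∀ i j, (if p a i = p a j then
          conj (c i) * c j * ((ρ:ℂ) ^ (S.filter fun v => p v i ≠ p v j).card) else 0)
          = ∑ b ∈ Finset.univ.image (p a),
            conj (if p a i = b then c i else 0) * (if p a j = b then c j else 0) *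
              ((ρ:ℂ) ^ (S.filter fun v => p v i ≠ p v j).card) := by
        intro i j
        by_cases h : p a i = p a j
        · rw [Finset.sum_eq_single_of_mem (p a i)
            (Finset.mem_image_of_mem _ (Finset.mem_univ i))]
          · simp [h]
          · intro b _ hb
            rw [if_neg (fun h2 : p a i = b => hb (h2 ▸ rfl))]
            simp
        · rw [if_neg h]
          symm
          apply Finset.sum_eq_zero
          intro b _
          by_cases h2 : p a i = b
          · rw [if_neg (fun h3 : p a j = b => h (h2.trans h3.symm))]
            simp
          · simp [h2]
      calc (0:ℂ) ≤ ∑ b ∈ Finset.univ.image (p a),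
          ∑ i, ∑ j, conj ((if p a i = b then c i else 0)) * (if p a j = b then c j else 0) *
            ((ρ:ℂ) ^ (S.filter fun v => p v i ≠ p v j).card) := by
            apply Finset.sum_nonneg
            intro b _
            exact ih (fun i => if p a i = b then c i else 0)
        _ = _ := by
            rw [Finset.sum_comm]
            refine Finset.sum_congr rfl fun i _ => ?_
            rw [Finset.sum_comm]
            refine Finset.sum_congr rfl fun j _ => ?_
            exact (hpt i j).symm
    have h0c : (0:ℂ) ≤ (ρ:ℂ) := by
      rw [← Complex.ofReal_zero, Complex.real_le_real]
      exact h0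
    have h1c : (0:ℂ) ≤ 1 - (ρ:ℂ) := by
      have h2 : ((1 - ρ : ℝ) : ℂ) = 1 - (ρ:ℂ) := by push_cast; ring
      rw [← h2, ← Complex.ofReal_zero, Complex.real_le_real]
      linarith
    exact add_nonneg (mul_nonneg h0c (ih c)) (mul_nonneg h1c hB)


end FPPD

/-- For a free product `Γ = Γ₁ * Γ₂` (formalized here as the free product of a
`Bool`-indexed family of two groups) and `0 < ρ < 1`, the function `φ_ρ(g) = ρ^{|g|}` is
positive definite: for all `g₁, …, g_n ∈ Γ` and `c₁, …, c_n ∈ ℂ`,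
`∑_{i,j} conj(c i) * c j * ρ^{|g i⁻¹ * g j|} ≥ 0`. -/
theorem freeProduct_wordLength_posDef
    {M : Bool → Type*} [∀ i, Group (M i)]
    (ρ : ℝ) (hρ₀ : 0 < ρ) (hρ₁ : ρ < 1)
    (n : ℕ) (g : Fin n → Monoid.CoprodI M) (c : Fin n → ℂ) :
    0 ≤ ∑ i, ∑ j, conj (c i) * c j *
      ((ρ : ℂ) ^ freeProductWordLength ((g i)⁻¹ * g j)) := by
  classical
  have key := fun (x y : Monoid.CoprodI M) => FPPD.key_count (M := M) x y
  have hfin : (⋃ k, FPPD.T M (g k) 1).Finite :=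
    Set.finite_iUnion (fun k => (key (g k) 1).1)
  set S : Finset (FPPD.Vert M) := hfin.toFinset with hSdef
  have hcard : ∀ i j, freeProductWordLength ((g i)⁻¹ * g j)
      = (S.filter fun v => FPPD.q v (g i) ≠ FPPD.q v (g j)).card := by
    intro i j
    obtain ⟨hfin2, hc2⟩ := key (g i) (g j)
    rw [← hc2, Set.ncard_eq_toFinset_card _ hfin2]
    congr 1
    apply Finset.ext
    intro v
    simp only [Set.Finite.mem_toFinset, Finset.mem_filter, hSdef]
    constructor
    · intro hv
      refine ⟨?_, hv⟩
      by_cases h : FPPD.q v (g i) = FPPD.q v 1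
      · have : FPPD.q v (g j) ≠ FPPD.q v 1 := fun h2 => hv (h.trans h2.symm)
        exact Set.mem_iUnion.mpr ⟨j, this⟩
      · exact Set.mem_iUnion.mpr ⟨i, h⟩
    · exact fun h => h.2
  have hrw : ∀ i j, conj (c i) * c j * ((ρ : ℂ) ^ freeProductWordLength ((g i)⁻¹ * g j))
      = conj (c i) * c j *
        ((ρ : ℂ) ^ (S.filter fun v => FPPD.q v (g i) ≠ FPPD.q v (g j)).card) := by
    intro i j; rw [hcard]
  calc (0:ℂ) ≤ ∑ i, ∑ j, conj (c i) * c j *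
      ((ρ : ℂ) ^ (S.filter fun v => FPPD.q v (g i) ≠ FPPD.q v (g j)).card) :=
        FPPD.posdef_cut ρ (le_of_lt hρ₀) (le_of_lt hρ₁) (fun v k => FPPD.q v (g k)) S c
    _ = _ := by
        refine Finset.sum_congr rfl fun i _ => Finset.sum_congr rfl fun j _ => ?_
        exact (hrw i j).symm
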